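/- Let I, J be disjoint intervals with |I| ≤ |J| and dist(I, ∂J) ≥ |J|^{3/4}·|I|^{1/4} (where ∂J denotes the endpoints of J). Let f_I ∈ L²(μ) be supported on I with ∫ f_I dμ = 0 and g_J ∈ L²(ν) supported on J. Then |∬ f_I(t) g_J(s)/(t-s) dμ(t) dν(s)| ≤ A·(|I|^{1/2}|J|^{1/2}/(dist(I,J)+|I|+|J|)²)·μ(I)^{1/2}·ν(J)^{1/2}·‖f_I‖_{L²(μ)}·‖g_J‖_{L²(ν)}. -/

import Mathlib

set_option maxHeartbeats 1000000


open MeasureTheory Set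

/-- Distance between two sets of reals. -/
noncomputable def setDist (s t : Set ℝ) : ℝ := sInf (Set.image2 dist s t)

private lemma arith_aux {x y r : ℝ} (hx : 0 < x) (hxy : x ≤ y) (hr : 0 ≤ r) :
    x / (max (y ^ ((3:ℝ)/4) * x ^ ((1:ℝ)/4)) r) ^ 2
      ≤ 9 * (Real.sqrt x * Real.sqrt y / (r + x + y) ^ 2) := by
  have hy : (0:ℝ) < y := lt_of_lt_of_le hx hxy
  set δ : ℝ := y ^ ((3:ℝ)/4) * x ^ ((1:ℝ)/4) with hδ
  have hδpos : 0 < δ := mul_pos (Real.rpow_pos_of_pos hy _) (Real.rpow_pos_of_pos hx _)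
  set m : ℝ := max δ r with hm
  have hmpos : 0 < m := lt_of_lt_of_le hδpos (le_max_left _ _)
  have hD : 0 < r + x + y := by linarith
  have hsx : 0 ≤ Real.sqrt x := Real.sqrt_nonneg x
  have hsy : 0 ≤ Real.sqrt y := Real.sqrt_nonneg y
  have hδ2 : δ ^ 2 = y ^ ((3:ℝ)/2) * x ^ ((1:ℝ)/2) := by
    rw [hδ, mul_pow, ← Real.rpow_natCast (y ^ ((3:ℝ)/4)) 2,
      ← Real.rpow_natCast (x ^ ((1:ℝ)/4)) 2, ← Real.rpow_mul hy.le, ← Real.rpow_mul hx.le]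
    norm_num
  have hcalc : Real.sqrt x * Real.sqrt y * δ ^ 2 = x * y ^ 2 := by
    rw [hδ2, Real.sqrt_eq_rpow, Real.sqrt_eq_rpow]
    rw [show x ^ (1/(2:ℝ)) * y ^ (1/(2:ℝ)) * (y ^ ((3:ℝ)/2) * x ^ ((1:ℝ)/2))
        = (x ^ (1/(2:ℝ)) * x ^ ((1:ℝ)/2)) * (y ^ (1/(2:ℝ)) * y ^ ((3:ℝ)/2)) by ring,
      ← Real.rpow_add hx, ← Real.rpow_add hy]
    norm_num
  have key : x * (r + x + y) ^ 2 ≤ 9 * (Real.sqrt x * Real.sqrt y) * m ^ 2 := by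
    have hxle : x ≤ Real.sqrt x * Real.sqrt y := by
      have h1 : Real.sqrt x ≤ Real.sqrt y := Real.sqrt_le_sqrt hxy
      nlinarith [Real.mul_self_sqrt hx.le]
    have hDle : r + x + y ≤ 3 * max r y := by
      have h1 : r ≤ max r y := le_max_left _ _
      have h2 : y ≤ max r y := le_max_right _ _
      linarith
    have hD2 : (r + x + y) ^ 2 ≤ 9 * (max r y) ^ 2 := by nlinarith
    have hmain : x * (max r y) ^ 2 ≤ Real.sqrt x * Real.sqrt y * m ^ 2 := by
      rcases le_total r y with h | h
      · rw [max_eq_right h]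
        have h1 : δ ≤ m := le_max_left _ _
        have h2 : δ ^ 2 ≤ m ^ 2 := by nlinarith
        nlinarith [mul_nonneg hsx hsy]
      · rw [max_eq_left h]
        have h1 : r ≤ m := le_max_right _ _
        have h2 : r ^ 2 ≤ m ^ 2 := by nlinarith
        nlinarith [mul_nonneg hsx hsy, sq_nonneg r]
    nlinarith
  rw [show 9 * (Real.sqrt x * Real.sqrt y / (r + x + y) ^ 2)
      = (9 * (Real.sqrt x * Real.sqrt y)) / (r + x + y) ^ 2 by ring,
    div_le_div_iff₀ (pow_pos hmpos 2) (pow_pos hD 2)]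
  linarith

private lemma cs_aux {μ : Measure ℝ} [IsFiniteMeasure μ] {f : ℝ → ℝ} (hf : MemLp f 2 μ) :
    ∫ t, |f t| ∂μ ≤ Real.sqrt (μ Set.univ).toReal * Real.sqrt (∫ t, f t ^ 2 ∂μ) := by
  have h2 : (2:ℝ).HolderConjugate 2 := Real.HolderConjugate.two_two
  have hfa : MemLp (fun t => |f t|) (ENNReal.ofReal 2) μ := by
    rw [show ENNReal.ofReal 2 = 2 by norm_num]
    simpa [Real.norm_eq_abs] using hf.norm
  have hone : MemLp (fun _ : ℝ => (1:ℝ)) (ENNReal.ofReal 2) μ := memLp_const 1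
  have := integral_mul_le_Lp_mul_Lq_of_nonneg h2
    (Filter.Eventually.of_forall fun t => abs_nonneg (f t))
    (Filter.Eventually.of_forall fun _ => zero_le_one) hfa hone
  simp only [mul_one] at this
  calc ∫ t, |f t| ∂μ
      ≤ (∫ t, |f t| ^ (2:ℝ) ∂μ) ^ (1/(2:ℝ)) * (∫ _t, (1:ℝ) ^ (2:ℝ) ∂μ) ^ (1/(2:ℝ)) := this
    _ = Real.sqrt (μ Set.univ).toReal * Real.sqrt (∫ t, f t ^ 2 ∂μ) := by
        rw [show (fun t => |f t| ^ (2:ℝ)) = fun t => f t ^ 2 from funext fun t => by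
            rw [Real.rpow_two, sq_abs]]
        simp only [Real.one_rpow, integral_const, smul_eq_mul, mul_one, Measure.real]
        rw [← Real.sqrt_eq_rpow, ← Real.sqrt_eq_rpow, mul_comm]

/-- Interaction estimate for disjoint intervals I = [a,b], J = [c,d] with |I| ≤ |J| and
dist(I, ∂J) ≥ |J|^{3/4}|I|^{1/4}: if f is supported on I with μ-mean zero and g is
supported on J, then |∬ f(t)g(s)/(t-s) dμ(t)dν(s)| ≤
A · |I|^{1/2}|J|^{1/2}/(dist(I,J)+|I|+|J|)² · μ(I)^{1/2} ν(J)^{1/2} ‖f‖_{L²(μ)} ‖g‖_{L²(ν)}. -/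
theorem separated_interaction :
    ∃ A : ℝ, 0 < A ∧
    ∀ (μ ν : Measure ℝ) (a b c d : ℝ) (f g : ℝ → ℝ),
      a < b → c < d →
      b - a ≤ d - c →
      Disjoint (Set.Icc a b) (Set.Icc c d) →
      ((d - c) ^ ((3:ℝ)/4)) * ((b - a) ^ ((1:ℝ)/4)) ≤
        Metric.infDist c (Set.Icc a b) →
      ((d - c) ^ ((3:ℝ)/4)) * ((b - a) ^ ((1:ℝ)/4)) ≤
        Metric.infDist d (Set.Icc a b) →
      μ (Set.Icc a b) < ⊤ → ν (Set.Icc c d) < ⊤ →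
      (∀ t ∉ Set.Icc a b, f t = 0) → (∀ s ∉ Set.Icc c d, g s = 0) →
      MemLp f 2 μ → MemLp g 2 ν →
      (∫ t in Set.Icc a b, f t ∂μ) = 0 →
      |∫ t in Set.Icc a b, (∫ s in Set.Icc c d, f t * g s / (t - s) ∂ν) ∂μ| ≤
        A * (Real.sqrt (b - a) * Real.sqrt (d - c) /
              (setDist (Set.Icc a b) (Set.Icc c d) + (b - a) + (d - c)) ^ 2) *
          Real.sqrt (μ (Set.Icc a b)).toReal * Real.sqrt (ν (Set.Icc c d)).toReal *
          Real.sqrt (∫ t in Set.Icc a b, (f t) ^ 2 ∂μ) *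
          Real.sqrt (∫ s in Set.Icc c d, (g s) ^ 2 ∂ν) := by
  refine ⟨9, by norm_num, ?_⟩
  intro μ ν a b c d f g hab hcd hlen hdisj hcI hdI hμfin hνfin hfsupp hgsupp hf hg hf0
  have hx : (0:ℝ) < b - a := by linarith
  have hy : (0:ℝ) < d - c := by linarith
  set I : Set ℝ := Set.Icc a b with hIdef
  set J : Set ℝ := Set.Icc c d with hJdef
  set δ : ℝ := ((d - c) ^ ((3:ℝ)/4)) * ((b - a) ^ ((1:ℝ)/4)) with hδdef
  set ρ : ℝ := setDist I J with hρdef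
  set m : ℝ := max δ ρ with hmdef
  have hδpos : 0 < δ := mul_pos (Real.rpow_pos_of_pos hy _) (Real.rpow_pos_of_pos hx _)
  have hmpos : 0 < m := lt_of_lt_of_le hδpos (le_max_left _ _)
  have hρnonneg : 0 ≤ ρ := by
    apply Real.sInf_nonneg
    rintro r ⟨t, -, s, -, rfl⟩
    exact dist_nonneg
  -- order of the intervals
  have hord : b < c ∨ d < a := by
    by_contra hcon
    push_neg at hcon
    obtain ⟨h1, h2⟩ := hcon
    exact Set.disjoint_left.mp hdisj
      (⟨le_max_left _ _, max_le hab.le h1⟩ : max a c ∈ I)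
      (⟨le_max_right _ _, max_le h2 hcd.le⟩ : max a c ∈ J)
  -- separation
  have hmle : ∀ t ∈ I, ∀ s ∈ J, m ≤ |t - s| := by
    intro t ht s hs
    refine max_le ?_ ?_
    · rcases hord with h | h
      · have h1 : δ ≤ c - t := by
          calc δ ≤ Metric.infDist c I := hcI
            _ ≤ dist c t := Metric.infDist_le_dist_of_mem ht
            _ = c - t := by
                rw [Real.dist_eq, abs_of_nonneg]; linarith [ht.2]
        rw [abs_of_nonpos (by linarith [ht.2, hs.1])]
        linarith [hs.1]
      · have h1 : δ ≤ t - d := by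
          calc δ ≤ Metric.infDist d I := hdI
            _ ≤ dist d t := Metric.infDist_le_dist_of_mem ht
            _ = t - d := by
                rw [Real.dist_eq, abs_of_nonpos (by linarith [ht.1] : d - t ≤ 0)]; ring
        rw [abs_of_nonneg (by linarith [ht.1, hs.2])]
        linarith [hs.2]
    · have hbdd : BddBelow (Set.image2 dist I J) := by
        refine ⟨0, ?_⟩
        rintro r ⟨t', -, s', -, rfl⟩
        exact dist_nonneg
      have := csInf_le hbdd (Set.mem_image2_of_mem ht hs)
      rwa [Real.dist_eq] at this
  -- finiteness of restricted measures
  haveI hfinμ : IsFiniteMeasure (μ.restrict I) :=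
    ⟨by rwa [Measure.restrict_apply_univ]⟩
  haveI hfinν : IsFiniteMeasure (ν.restrict J) :=
    ⟨by rwa [Measure.restrict_apply_univ]⟩
  have hfI : MemLp f 2 (μ.restrict I) := hf.restrict I
  have hgJ : MemLp g 2 (ν.restrict J) := hg.restrict J
  have hfint : Integrable f (μ.restrict I) := hfI.integrable one_le_two
  have hgint : Integrable g (ν.restrict J) := hgJ.integrable one_le_two
  have haI : a ∈ I := ⟨le_refl a, hab.le⟩
  -- kernel integrability
  have hker : ∀ t ∈ I, Integrable (fun s => g s / (t - s)) (ν.restrict J) := by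
    intro t ht
    refine Integrable.mono' (hgint.abs.mul_const m⁻¹) ?_ ?_
    · simp only [div_eq_mul_inv]
      exact hgint.aestronglyMeasurable.mul
        (((measurable_const.sub measurable_id).inv).aestronglyMeasurable)
    · filter_upwards [ae_restrict_mem measurableSet_Icc] with s hs
      have h1 : m ≤ |t - s| := hmle t ht s hs
      rw [Real.norm_eq_abs, abs_div, div_eq_mul_inv]
      exact mul_le_mul_of_nonneg_left (inv_anti₀ hmpos h1) (abs_nonneg _)
  set h : ℝ → ℝ := fun t => ∫ s in J, g s / (t - s) ∂ν with hhdef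
  -- measurability of h
  have hgm := hgint.aestronglyMeasurable
  have hhsm : StronglyMeasurable h := by
    have hh_eq : h = fun t => ∫ s in J, hgm.mk g s / (t - s) ∂ν := by
      funext t
      exact integral_congr_ae (hgm.ae_eq_mk.mono fun s hs => by simp only [hs])
    rw [hh_eq]
    simp only [div_eq_mul_inv]
    apply StronglyMeasurable.integral_prod_right
    exact (hgm.stronglyMeasurable_mk.comp_measurable measurable_snd).mul
      (((measurable_fst.sub measurable_snd).inv).stronglyMeasurable)
  -- pointwise bound
  have hptw : ∀ t ∈ I, |h t - h a| ≤ (b - a) / m ^ 2 * ∫ s in J, |g s| ∂ν := by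
    intro t ht
    have hsub : h t - h a = ∫ s in J, (g s / (t - s) - g s / (a - s)) ∂ν :=
      (integral_sub (hker t ht) (hker a haI)).symm
    rw [hsub, ← Real.norm_eq_abs]
    have hint : Integrable (fun s => (b - a) / m ^ 2 * |g s|) (ν.restrict J) :=
      hgint.abs.const_mul _
    refine (norm_integral_le_of_norm_le hint ?_).trans_eq (integral_const_mul _ _)
    filter_upwards [ae_restrict_mem measurableSet_Icc] with s hs
    have h1 : m ≤ |t - s| := hmle t ht s hs
    have h2 : m ≤ |a - s| := hmle a haI s hs
    have hts : t - s ≠ 0 := by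
      intro e; rw [e] at h1; simp at h1; linarith
    have has : a - s ≠ 0 := by
      intro e; rw [e] at h2; simp at h2; linarith
    have key : g s / (t - s) - g s / (a - s) = g s * ((a - t) / ((t - s) * (a - s))) := by
      field_simp
      ring
    rw [key, Real.norm_eq_abs, abs_mul, abs_div, abs_mul]
    have hat : |a - t| ≤ b - a := by
      rw [abs_sub_comm, abs_of_nonneg (by linarith [ht.1])]
      linarith [ht.2]
    have hden : m ^ 2 ≤ |t - s| * |a - s| := by
      rw [sq]; exact mul_le_mul h1 h2 hmpos.le (abs_nonneg _)
    calc |g s| * (|a - t| / (|t - s| * |a - s|))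
        ≤ |g s| * ((b - a) / m ^ 2) := by
          refine mul_le_mul_of_nonneg_left ?_ (abs_nonneg _)
          exact div_le_div₀ (by linarith) hat (pow_pos hmpos 2) hden
      _ = (b - a) / m ^ 2 * |g s| := mul_comm _ _
  set K : ℝ := (b - a) / m ^ 2 * ∫ s in J, |g s| ∂ν with hKdef
  -- main estimate
  have hmain : |∫ t in I, (∫ s in J, f t * g s / (t - s) ∂ν) ∂μ|
      ≤ (∫ t in I, |f t| ∂μ) * K := by
    have hrw : (∫ t in I, (∫ s in J, f t * g s / (t - s) ∂ν) ∂μ)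
        = ∫ t in I, f t * h t ∂μ := by
      congr 1
      funext t
      simp only [hhdef, mul_div_assoc]
      exact integral_const_mul _ _
    rw [hrw]
    have hint1 : Integrable (fun t => f t * (h t - h a)) (μ.restrict I) := by
      refine Integrable.mono' (hfint.abs.mul_const K) ?_ ?_
      · exact hfint.aestronglyMeasurable.mul
          ((hhsm.sub stronglyMeasurable_const).aestronglyMeasurable)
      · filter_upwards [ae_restrict_mem measurableSet_Icc] with t ht
        rw [Real.norm_eq_abs, abs_mul]
        exact mul_le_mul_of_nonneg_left (hptw t ht) (abs_nonneg _)
    have hint2 : Integrable (fun t => f t * h a) (μ.restrict I) := hfint.mul_const _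
    calc |∫ t in I, f t * h t ∂μ|
        = |∫ t in I, (f t * (h t - h a) + f t * h a) ∂μ| := by
          congr 1; apply integral_congr_ae; filter_upwards with t; ring
      _ = |∫ t in I, f t * (h t - h a) ∂μ + ∫ t in I, f t * h a ∂μ| := by
          rw [integral_add hint1 hint2]
      _ = |∫ t in I, f t * (h t - h a) ∂μ| := by
          rw [integral_mul_const, hf0, zero_mul, add_zero]
      _ ≤ ∫ t in I, |f t| * K ∂μ := by
          rw [← Real.norm_eq_abs]
          refine norm_integral_le_of_norm_le (hfint.abs.mul_const K) ?_
          filter_upwards [ae_restrict_mem measurableSet_Icc] with t ht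
          rw [Real.norm_eq_abs, abs_mul]
          exact mul_le_mul_of_nonneg_left (hptw t ht) (abs_nonneg _)
      _ = (∫ t in I, |f t| ∂μ) * K := integral_mul_const _ _
  -- Cauchy-Schwarz
  have hCSf : ∫ t in I, |f t| ∂μ
      ≤ Real.sqrt (μ I).toReal * Real.sqrt (∫ t in I, f t ^ 2 ∂μ) := by
    have := cs_aux hfI
    rwa [Measure.restrict_apply_univ] at this
  have hCSg : ∫ s in J, |g s| ∂ν
      ≤ Real.sqrt (ν J).toReal * Real.sqrt (∫ s in J, g s ^ 2 ∂ν) := by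
    have := cs_aux hgJ
    rwa [Measure.restrict_apply_univ] at this
  have harith : (b - a) / m ^ 2
      ≤ 9 * (Real.sqrt (b - a) * Real.sqrt (d - c) / (ρ + (b - a) + (d - c)) ^ 2) := by
    have h0 := arith_aux hx hlen hρnonneg
    have hmm : max ((d - c) ^ ((3:ℝ)/4) * (b - a) ^ ((1:ℝ)/4)) ρ = m := by
      rw [hmdef, hδdef]
    rw [hmm] at h0
    exact h0
  -- nonnegativity facts
  have hfabs : 0 ≤ ∫ t in I, |f t| ∂μ := integral_nonneg fun t => abs_nonneg _
  have hgabs : 0 ≤ ∫ s in J, |g s| ∂ν := integral_nonneg fun s => abs_nonneg _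
  have hPf : 0 ≤ Real.sqrt (μ I).toReal * Real.sqrt (∫ t in I, f t ^ 2 ∂μ) :=
    mul_nonneg (Real.sqrt_nonneg _) (Real.sqrt_nonneg _)
  have hPg : 0 ≤ Real.sqrt (ν J).toReal * Real.sqrt (∫ s in J, g s ^ 2 ∂ν) :=
    mul_nonneg (Real.sqrt_nonneg _) (Real.sqrt_nonneg _)
  calc |∫ t in I, (∫ s in J, f t * g s / (t - s) ∂ν) ∂μ|
      ≤ (∫ t in I, |f t| ∂μ) * K := hmain
    _ = (b - a) / m ^ 2 * ((∫ t in I, |f t| ∂μ) * (∫ s in J, |g s| ∂ν)) := by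
        rw [hKdef]; ring
    _ ≤ (b - a) / m ^ 2 *
        ((Real.sqrt (μ I).toReal * Real.sqrt (∫ t in I, f t ^ 2 ∂μ)) *
         (Real.sqrt (ν J).toReal * Real.sqrt (∫ s in J, g s ^ 2 ∂ν))) := by
        refine mul_le_mul_of_nonneg_left ?_ (div_nonneg hx.le (sq_nonneg m))
        exact mul_le_mul hCSf hCSg hgabs hPf
    _ ≤ 9 * (Real.sqrt (b - a) * Real.sqrt (d - c) / (ρ + (b - a) + (d - c)) ^ 2) *
        ((Real.sqrt (μ I).toReal * Real.sqrt (∫ t in I, f t ^ 2 ∂μ)) *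
         (Real.sqrt (ν J).toReal * Real.sqrt (∫ s in J, g s ^ 2 ∂ν))) :=
        mul_le_mul_of_nonneg_right harith (mul_nonneg hPf hPg)
    _ = 9 * (Real.sqrt (b - a) * Real.sqrt (d - c) /
              (setDist I J + (b - a) + (d - c)) ^ 2) *
          Real.sqrt (μ I).toReal * Real.sqrt (ν J).toReal *
          Real.sqrt (∫ t in I, f t ^ 2 ∂μ) *
          Real.sqrt (∫ s in J, g s ^ 2 ∂ν) := by
        rw [hρdef]; ring
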